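/- Let G be an abelian subgroup of the Pauli group 𝒫_n on n qubits with −I₂^{⊗n} ∉ G, and for M₀ ∈ M_{2^n}(ℂ) set 𝒱_{M₀} := span_ℂ{g M₀ g : g ∈ G}. Then the linear span, over all M₀ for which 𝒱_{M₀} contains the identity and is closed under adjoints, of the subspaces 𝒱_{M₀}, equals span_ℂ((𝒫_n \ N(G)) ∪ {I₂^{⊗n}}), where N(G) = {h ∈ 𝒫_n : h G h⁻¹ = G} is the normalizer of G in 𝒫_n. -/

import Mathlib

open Matrix

/-- The four Pauli matrices: `σ₀ = I₂`, `σ₁ = Z`, `σ₂ = X`, `σ₃ = Y`. -/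
noncomputable def pauli : Fin 4 → Matrix (Fin 2) (Fin 2) ℂ
  | 0 => 1
  | 1 => !![1, 0; 0, -1]
  | 2 => !![0, 1; 1, 0]
  | 3 => !![0, Complex.I; -Complex.I, 0]

/-- The Pauli word `σ_{j₁} ⊗ ⋯ ⊗ σ_{jₙ} ∈ M_{2^n}(ℂ)`, as a matrix indexed by
`{0,1}^n`, with entry `∏ i, (σ_{j i}) (a i) (b i)`. -/
noncomputable def pauliWord {n : ℕ} (j : Fin n → Fin 4) :
    Matrix (Fin n → Fin 2) (Fin n → Fin 2) ℂ :=
  Matrix.of fun a b => ∏ i, pauli (j i) (a i) (b i)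

/-- `Z_r`: the Pauli word with `Z` in the `r`-th position and `I₂` elsewhere. -/
noncomputable def Zword {n : ℕ} (r : Fin n) :
    Matrix (Fin n → Fin 2) (Fin n → Fin 2) ℂ :=
  pauliWord (fun i => if i = r then 1 else 0)

/-- The subgroup (as a multiplicative submonoid: the generators are involutions,
so the generated submonoid is the generated subgroup) `⟨Z₁, …, Z_s⟩` of `M_{2^n}(ℂ)`. -/
noncomputable def ZSubgroup (n s : ℕ) :
    Submonoid (Matrix (Fin n → Fin 2) (Fin n → Fin 2) ℂ) :=
  Submonoid.closure {A | ∃ r : Fin n, (r : ℕ) < s ∧ A = Zword r}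

/-- The Pauli group `𝒫_n` on `n` qubits, as a set of matrices. -/
noncomputable def pauliGroupSet (n : ℕ) :
    Set (Matrix (Fin n → Fin 2) (Fin n → Fin 2) ℂ) :=
  {A | ∃ c ∈ ({1, -1, Complex.I, -Complex.I} : Set ℂ),
    ∃ j : Fin n → Fin 4, A = c • pauliWord j}

lemma pauli_mul_self (p : Fin 4) : pauli p * pauli p = 1 := by
  fin_cases p <;>
    · ext a b
      fin_cases a <;> fin_cases b <;>
        simp [pauli, Matrix.mul_apply, Fin.sum_univ_two, Complex.I_mul_I]

def sgn2 (p q : Fin 4) : ℂ := if p = 0 ∨ q = 0 ∨ p = q then 1 else -1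

lemma sgn2_mem (p q : Fin 4) : sgn2 p q = 1 ∨ sgn2 p q = -1 := by
  unfold sgn2; split <;> simp

lemma pauli_conj (p q : Fin 4) : pauli p * pauli q * pauli p = sgn2 p q • pauli q := by
  fin_cases p <;> fin_cases q <;>
    · ext a b
      fin_cases a <;> fin_cases b <;>
        simp [pauli, sgn2, Matrix.mul_apply, Fin.sum_univ_two]

lemma pauli_herm (p : Fin 4) : (pauli p)ᴴ = pauli p := by
  fin_cases p <;>
    · ext a b
      fin_cases a <;> fin_cases b <;> simp [pauli]

/-- general entrywise-product multiplication -/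
lemma word_mul {n : ℕ} (A B : Fin n → Matrix (Fin 2) (Fin 2) ℂ) :
    (Matrix.of fun a b : Fin n → Fin 2 => ∏ i, A i (a i) (b i)) *
      (Matrix.of fun a b : Fin n → Fin 2 => ∏ i, B i (a i) (b i)) =
    Matrix.of fun a b : Fin n → Fin 2 => ∏ i, (A i * B i) (a i) (b i) := by
  ext a b
  simp only [Matrix.mul_apply, Matrix.of_apply]
  have : ∀ c : Fin n → Fin 2, (∏ i, A i (a i) (c i)) * ∏ i, B i (c i) (b i)
      = ∏ i, (A i (a i) (c i) * B i (c i) (b i)) := fun c => (Finset.prod_mul_distrib).symm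
  simp only [this]
  rw [← Fintype.prod_sum fun i x => A i (a i) x * B i x (b i)]

lemma word_one {n : ℕ} :
    (Matrix.of fun a b : Fin n → Fin 2 =>
      ∏ i, (1 : Matrix (Fin 2) (Fin 2) ℂ) (a i) (b i)) = 1 := by
  ext a b
  simp only [Matrix.of_apply, Matrix.one_apply]
  by_cases h : a = b
  · subst h; simp
  · rw [if_neg h]
    obtain ⟨i, hi⟩ := Function.ne_iff.mp h
    exact Finset.prod_eq_zero (Finset.mem_univ i) (by simp [Matrix.one_apply, hi])

lemma word_sq {n : ℕ} (j : Fin n → Fin 4) : pauliWord j * pauliWord j = 1 := by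
  unfold pauliWord
  rw [word_mul]
  simp only [pauli_mul_self]
  exact word_one

lemma word_conj {n : ℕ} (j k : Fin n → Fin 4) :
    pauliWord j * pauliWord k * pauliWord j
      = (∏ i, sgn2 (j i) (k i)) • pauliWord k := by
  unfold pauliWord
  rw [word_mul, word_mul]
  ext a b
  simp only [Matrix.of_apply, Matrix.smul_apply, smul_eq_mul]
  rw [← Finset.prod_mul_distrib]
  refine Finset.prod_congr rfl fun i _ => ?_
  rw [pauli_conj]
  simp

lemma wsgn_mem {n : ℕ} (j k : Fin n → Fin 4) :
    (∏ i, sgn2 (j i) (k i)) = 1 ∨ (∏ i, sgn2 (j i) (k i)) = -1 := by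
  rw [← mul_self_eq_one_iff, ← Finset.prod_mul_distrib]
  refine Finset.prod_eq_one fun i _ => ?_
  rcases sgn2_mem (j i) (k i) with h | h <;> rw [h] <;> ring

lemma word_herm {n : ℕ} (j : Fin n → Fin 4) : (pauliWord j)ᴴ = pauliWord j := by
  ext a b
  simp only [Matrix.conjTranspose_apply, pauliWord, Matrix.of_apply]
  rw [star_prod]
  refine Finset.prod_congr rfl fun i _ => ?_
  have := congrFun (congrFun (pauli_herm (j i)) (a i)) (b i)
  rw [Matrix.conjTranspose_apply] at this
  exact this

lemma word_ne_zero {n : ℕ} (j : Fin n → Fin 4) : pauliWord j ≠ 0 := by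
  intro h
  have h2 : ∀ p : Fin 4, pauli p 0 (![0, 0, 1, 1] p) ≠ 0 := by
    intro p; fin_cases p <;> simp [pauli, Matrix.one_apply]
  have := congrFun (congrFun h (fun _ => 0)) (fun i => ![0, 0, 1, 1] (j i))
  simp only [pauliWord, Matrix.of_apply, Matrix.zero_apply] at this
  exact Finset.prod_ne_zero_iff.mpr (fun i _ => h2 (j i)) this


noncomputable def c2 : Fin 2 → Fin 2 → Fin 4 → ℂ
  | 0, 0 => ![1/2, 1/2, 0, 0]
  | 1, 1 => ![1/2, -(1/2), 0, 0]
  | 0, 1 => ![0, 0, 1/2, -(Complex.I/2)]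
  | 1, 0 => ![0, 0, 1/2, Complex.I/2]

lemma entry_decomp (x y a b : Fin 2) :
    (if x = a ∧ y = b then (1 : ℂ) else 0) = ∑ p : Fin 4, c2 x y p * pauli p a b := by
  fin_cases x <;> fin_cases y <;> fin_cases a <;> fin_cases b <;>
    norm_num [c2, pauli, Fin.sum_univ_four, Matrix.one_apply, Complex.ext_iff, Matrix.cons_val_two, Matrix.vecHead, Matrix.vecTail, Matrix.cons_val_three]

lemma std_decomp {n : ℕ} (a b : Fin n → Fin 2) :
    Matrix.single a b (1 : ℂ)
      = ∑ j : Fin n → Fin 4, (∏ i, c2 (a i) (b i) (j i)) • pauliWord j := by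
  ext x y
  simp only [Matrix.single, Matrix.of_apply, Matrix.sum_apply, Matrix.smul_apply,
    smul_eq_mul]
  have h1 : (if a = x ∧ b = y then (1:ℂ) else 0)
      = ∏ i, (if a i = x i ∧ b i = y i then (1:ℂ) else 0) := by
    by_cases h : a = x ∧ b = y
    · obtain ⟨rfl, rfl⟩ := h; simp
    · rw [if_neg h]
      have : ∃ i, ¬(a i = x i ∧ b i = y i) := by
        by_contra hc
        push_neg at hc
        exact h ⟨funext fun i => (hc i).1, funext fun i => (hc i).2⟩
      obtain ⟨i, hi⟩ := this
      exact (Finset.prod_eq_zero (Finset.mem_univ i)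
        (if_neg hi : (if a i = x i ∧ b i = y i then (1:ℂ) else 0) = 0)).symm
  rw [h1]
  simp only [entry_decomp]
  rw [Fintype.prod_sum fun i p => c2 (a i) (b i) p * pauli p (x i) (y i)]
  refine Finset.sum_congr rfl fun j _ => ?_
  rw [Finset.prod_mul_distrib]
  simp [pauliWord]

lemma word_span {n : ℕ} (M : Matrix (Fin n → Fin 2) (Fin n → Fin 2) ℂ) :
    M ∈ Submodule.span ℂ (Set.range (pauliWord (n := n))) := by
  rw [Matrix.matrix_eq_sum_single M]
  refine Submodule.sum_mem _ fun a _ => Submodule.sum_mem _ fun b _ => ?_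
  have : Matrix.single a b (M a b) = M a b • Matrix.single a b (1:ℂ) := by
    rw [Matrix.smul_single]; rw [smul_eq_mul, mul_one]
  rw [this, std_decomp]
  refine Submodule.smul_mem _ _ (Submodule.sum_mem _ fun j _ => Submodule.smul_mem _ _ ?_)
  exact Submodule.subset_span ⟨j, rfl⟩

lemma sgn2_comm (p q : Fin 4) : sgn2 p q = sgn2 q p := by
  unfold sgn2
  have h : (p = 0 ∨ q = 0 ∨ p = q) ↔ (q = 0 ∨ p = 0 ∨ q = p) := by
    constructor <;> rintro (h | h | h) <;> simp [h, eq_comm]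
  rw [if_congr h rfl rfl]

lemma word_mem_pg {n : ℕ} (j : Fin n → Fin 4) : pauliWord j ∈ pauliGroupSet n :=
  ⟨1, by simp, j, (one_smul _ _).symm⟩

lemma pg_finite (n : ℕ) : (pauliGroupSet n).Finite := by
  have : pauliGroupSet n ⊆ (fun q : ℂ × (Fin n → Fin 4) => q.1 • pauliWord q.2) ''
      (({1, -1, Complex.I, -Complex.I} : Set ℂ) ×ˢ (Set.univ : Set (Fin n → Fin 4))) := by
    rintro A ⟨c, hc, j, rfl⟩
    exact ⟨(c, j), ⟨hc, Set.mem_univ _⟩, rfl⟩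
  refine Set.Finite.subset (Set.Finite.image _ (Set.Finite.prod ?_ Set.finite_univ)) this
  exact ((((Set.finite_singleton _).insert _).insert _).insert _)

lemma smul_word_sq {n : ℕ} {c : ℂ} (hc : c ≠ 0) (j : Fin n → Fin 4) :
    (c • pauliWord j) * (c⁻¹ • pauliWord j) = 1 := by
  rw [smul_mul_assoc, mul_smul_comm, smul_smul, word_sq, mul_inv_cancel₀ hc, one_smul]

lemma smul_word_inv {n : ℕ} {c : ℂ} (hc : c ≠ 0) (j : Fin n → Fin 4) :
    (c • pauliWord j)⁻¹ = c⁻¹ • pauliWord j :=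
  Matrix.inv_eq_right_inv (smul_word_sq hc j)

lemma word_inv {n : ℕ} (j : Fin n → Fin 4) : (pauliWord j)⁻¹ = pauliWord j :=
  Matrix.inv_eq_right_inv (word_sq j)

lemma smul_word_conj_eq {n : ℕ} {c : ℂ} (hc : c ≠ 0) (j : Fin n → Fin 4)
    (x : Matrix (Fin n → Fin 2) (Fin n → Fin 2) ℂ) :
    (c • pauliWord j) * x * (c • pauliWord j)⁻¹ = pauliWord j * x * (pauliWord j)⁻¹ := by
  rw [smul_word_inv hc, word_inv, smul_mul_assoc, smul_mul_assoc, mul_smul_comm,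
    smul_smul, mul_inv_cancel₀ hc, one_smul]


section main

variable {n : ℕ}

local notation "Mat" => Matrix (Fin n → Fin 2) (Fin n → Fin 2) ℂ

-- basic unit-group facts under the hypotheses
lemma hval_lemma (G : Subgroup (Matrix (Fin n → Fin 2) (Fin n → Fin 2) ℂ)ˣ)
    (hGpauli : ∀ g ∈ G, (g : Mat) ∈ pauliGroupSet n)
    (hneg : (-1 : (Matrix (Fin n → Fin 2) (Fin n → Fin 2) ℂ)ˣ) ∉ G) :
    ∀ g ∈ G, ∃ c : ℂ, ∃ j : Fin n → Fin 4,
      (c = 1 ∨ c = -1) ∧ (g : Mat) = c • pauliWord j := by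
  intro g hg
  obtain ⟨c, hc, j, hgv⟩ := hGpauli g hg
  have hsq : ((g * g : _ˣ) : Mat) = (c * c) • (1 : Mat) := by
    rw [Units.val_mul, hgv, smul_mul_assoc, mul_smul_comm, smul_smul, word_sq]
  have hcc : c * c = 1 ∨ c * c = -1 := by
    rcases hc with rfl | rfl | rfl | rfl
    · left; ring
    · left; ring
    · right; simpa using Complex.I_mul_I
    · right; rw [neg_mul_neg]; exact Complex.I_mul_I
  rcases hcc with hcc | hcc
  · refine ⟨c, j, ?_, hgv⟩
    exact mul_self_eq_one_iff.mp hcc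
  · exfalso
    apply hneg
    have : (g * g : _ˣ) = (-1 : _ˣ) := by
      apply Units.ext
      rw [hsq, hcc, Units.val_neg, Units.val_one, neg_smul, one_smul]
    rw [← this]
    exact mul_mem hg hg

lemma hsq_lemma (G : Subgroup (Matrix (Fin n → Fin 2) (Fin n → Fin 2) ℂ)ˣ)
    (hGpauli : ∀ g ∈ G, (g : Mat) ∈ pauliGroupSet n)
    (hneg : (-1 : (Matrix (Fin n → Fin 2) (Fin n → Fin 2) ℂ)ˣ) ∉ G) :
    ∀ g ∈ G, g * g = 1 := by
  intro g hg
  obtain ⟨c, j, hc, hgv⟩ := hval_lemma G hGpauli hneg g hg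
  apply Units.ext
  rw [Units.val_mul, hgv, smul_mul_assoc, mul_smul_comm, smul_smul, word_sq, Units.val_one]
  rcases hc with rfl | rfl <;> norm_num

/-- key sign lemma -/
lemma hkey_lemma (G : Subgroup (Matrix (Fin n → Fin 2) (Fin n → Fin 2) ℂ)ˣ)
    (hGpauli : ∀ g ∈ G, (g : Mat) ∈ pauliGroupSet n)
    (hneg : (-1 : (Matrix (Fin n → Fin 2) (Fin n → Fin 2) ℂ)ˣ) ∉ G) :
    ∀ g ∈ G, ∀ j : Fin n → Fin 4, ∃ s : ℂ, (s = 1 ∨ s = -1) ∧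
      (g : Mat) * pauliWord j * (g : Mat) = s • pauliWord j ∧
      pauliWord j * (g : Mat) * pauliWord j = s • (g : Mat) := by
  intro g hg j
  obtain ⟨c, k, hc, hgv⟩ := hval_lemma G hGpauli hneg g hg
  have hcc : c * c = 1 := by rcases hc with rfl | rfl <;> norm_num
  refine ⟨∏ i, sgn2 (k i) (j i), wsgn_mem k j, ?_, ?_⟩
  · rw [hgv, smul_mul_assoc, smul_mul_assoc, mul_smul_comm, smul_smul, hcc, one_smul, word_conj]
  · have hs : (∏ i, sgn2 (j i) (k i)) = ∏ i, sgn2 (k i) (j i) :=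
      Finset.prod_congr rfl fun i _ => sgn2_comm _ _
    rw [hgv, mul_smul_comm, smul_mul_assoc, word_conj, hs, smul_comm]

end main

section main2

variable {n : ℕ}

local notation "Mat" => Matrix (Fin n → Fin 2) (Fin n → Fin 2) ℂ

lemma hNword_lemma (G : Subgroup (Matrix (Fin n → Fin 2) (Fin n → Fin 2) ℂ)ˣ)
    (hGpauli : ∀ g ∈ G, (g : Mat) ∈ pauliGroupSet n)
    (hneg : (-1 : (Matrix (Fin n → Fin 2) (Fin n → Fin 2) ℂ)ˣ) ∉ G)
    (N : Set (Matrix (Fin n → Fin 2) (Fin n → Fin 2) ℂ))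
    (hN : N = {h ∈ pauliGroupSet n |
      (fun g => h * g * h⁻¹) '' (Units.val '' (G : Set (Matrix (Fin n → Fin 2) (Fin n → Fin 2) ℂ)ˣ))
        = Units.val '' (G : Set (Matrix (Fin n → Fin 2) (Fin n → Fin 2) ℂ)ˣ)}) :
    ∀ j : Fin n → Fin 4, (pauliWord j ∈ N ↔
      ∀ g ∈ G, (g : Mat) * pauliWord j * (g : Mat) = pauliWord j) := by
  intro j
  constructor
  · intro hw g hg
    rw [hN] at hw
    obtain ⟨-, himg⟩ := hw
    have hmem : pauliWord j * (g : Mat) * (pauliWord j)⁻¹ ∈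
        Units.val '' (G : Set (Matrix (Fin n → Fin 2) (Fin n → Fin 2) ℂ)ˣ) := by
      rw [← himg]
      exact ⟨(g : Mat), ⟨g, hg, rfl⟩, rfl⟩
    rw [word_inv] at hmem
    obtain ⟨u, hu, huv⟩ := hmem
    obtain ⟨s, hs, hgwg, hwgw⟩ := hkey_lemma G hGpauli hneg g hg j
    rcases hs with rfl | rfl
    · rw [one_smul] at hgwg; exact hgwg
    · exfalso
      apply hneg
      have huval : (u : Mat) = ((-1 : (Matrix (Fin n → Fin 2) (Fin n → Fin 2) ℂ)ˣ) * g : _ˣ) := by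
        rw [huv, hwgw, Units.val_mul, Units.val_neg, Units.val_one, neg_smul, one_smul,
          neg_mul, one_mul]
      have hu' : u = (-1 : _ˣ) * g := Units.ext huval
      have : (-1 : (Matrix (Fin n → Fin 2) (Fin n → Fin 2) ℂ)ˣ) = u * g⁻¹ := by
        rw [hu', mul_assoc, mul_inv_cancel, mul_one]
      rw [this]
      exact mul_mem hu (inv_mem hg)
  · intro hall
    rw [hN]
    refine ⟨word_mem_pg j, ?_⟩
    have hfix : ∀ x ∈ Units.val '' (G : Set (Matrix (Fin n → Fin 2) (Fin n → Fin 2) ℂ)ˣ),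
        pauliWord j * x * (pauliWord j)⁻¹ = x := by
      rintro x ⟨u, hu, rfl⟩
      obtain ⟨s, hs, hgwg, hwgw⟩ := hkey_lemma G hGpauli hneg u hu j
      have hs1 : s = 1 := by
        rcases hs with rfl | rfl
        · rfl
        · exfalso
          rw [hall u hu, neg_smul, one_smul] at hgwg
          have : (2 : ℂ) • pauliWord j = 0 := by
            rw [two_smul]
            nth_rewrite 1 [hgwg]
            simp
          rcases smul_eq_zero.mp this with h | h
          · norm_num at h
          · exact word_ne_zero j h
      rw [word_inv, hwgw, hs1, one_smul]
    calc (fun g => pauliWord j * g * (pauliWord j)⁻¹) ''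
          (Units.val '' (G : Set (Matrix (Fin n → Fin 2) (Fin n → Fin 2) ℂ)ˣ))
        = id '' (Units.val '' (G : Set (Matrix (Fin n → Fin 2) (Fin n → Fin 2) ℂ)ˣ)) :=
          Set.image_congr hfix
      _ = _ := Set.image_id _

noncomputable def Eop (n : ℕ)
    (GS : Finset (Matrix (Fin n → Fin 2) (Fin n → Fin 2) ℂ)ˣ) :
    Matrix (Fin n → Fin 2) (Fin n → Fin 2) ℂ →ₗ[ℂ] Matrix (Fin n → Fin 2) (Fin n → Fin 2) ℂ where
  toFun M := (GS.card : ℂ)⁻¹ • ∑ g ∈ GS, (g : Matrix (Fin n → Fin 2) (Fin n → Fin 2) ℂ) * M *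
    (g : Matrix (Fin n → Fin 2) (Fin n → Fin 2) ℂ)
  map_add' x y := by
    simp only [mul_add, add_mul, Finset.sum_add_distrib, smul_add]
  map_smul' c x := by
    simp only [RingHom.id_apply, mul_smul_comm, smul_mul_assoc, ← Finset.smul_sum]
    rw [smul_comm]

lemma Eop_apply (GS : Finset (Matrix (Fin n → Fin 2) (Fin n → Fin 2) ℂ)ˣ) (M : Mat) :
    Eop n GS M = (GS.card : ℂ)⁻¹ • ∑ g ∈ GS, (g : Mat) * M * (g : Mat) := rfl

lemma Eop_one (GS : Finset (Matrix (Fin n → Fin 2) (Fin n → Fin 2) ℂ)ˣ)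
    (h1 : ∀ g ∈ GS, (g : Mat) * (g : Mat) = 1) (hne : GS.Nonempty) :
    Eop n GS 1 = 1 := by
  rw [Eop_apply]
  have : ∑ g ∈ GS, (g : Mat) * 1 * (g : Mat) = GS.card • (1 : Mat) := by
    rw [Finset.sum_congr rfl fun g hg => by rw [mul_one, h1 g hg], Finset.sum_const]
  rw [this, ← Nat.cast_smul_eq_nsmul ℂ, smul_smul, inv_mul_cancel₀, one_smul]
  exact Nat.cast_ne_zero.mpr (Finset.card_ne_zero_of_mem hne.choose_spec)

lemma Eop_conj (G : Subgroup (Matrix (Fin n → Fin 2) (Fin n → Fin 2) ℂ)ˣ)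
    (hGcomm : ∀ g ∈ G, ∀ h ∈ G, g * h = h * g)
    (GS : Finset (Matrix (Fin n → Fin 2) (Fin n → Fin 2) ℂ)ˣ)
    (hGS : ∀ g, g ∈ GS ↔ g ∈ G) (g : (Matrix (Fin n → Fin 2) (Fin n → Fin 2) ℂ)ˣ)
    (hg : g ∈ G) (M : Mat) :
    Eop n GS ((g : Mat) * M * (g : Mat)) = Eop n GS M := by
  rw [Eop_apply, Eop_apply]
  congr 1
  have step : ∀ h ∈ GS, (h : Mat) * ((g : Mat) * M * (g : Mat)) * (h : Mat)
      = ((h * g : _ˣ) : Mat) * M * ((h * g : _ˣ) : Mat) := by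
    intro h hh
    rw [Units.val_mul]
    have : (g : Mat) * (h : Mat) = (h : Mat) * (g : Mat) := by
      rw [← Units.val_mul, ← Units.val_mul, hGcomm g hg h ((hGS h).mp hh)]
    rw [mul_assoc, mul_assoc, this]
    noncomm_ring
  rw [Finset.sum_congr rfl step]
  refine Finset.sum_bij' (fun h _ => h * g) (fun h _ => h * g⁻¹) ?_ ?_ ?_ ?_ ?_
  · intro a ha; exact (hGS _).mpr (mul_mem ((hGS a).mp ha) hg)
  · intro a ha; exact (hGS _).mpr (mul_mem ((hGS a).mp ha) (inv_mem hg))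
  · intro a ha; simp
  · intro a ha; simp
  · intro a ha; rfl

end main2

set_option maxHeartbeats 1000000 in
/-- Theorem 2 of the paper: let `G` be an abelian subgroup of the Pauli
group `𝒫_n` with `−I₂^{⊗n} ∉ G`, and for `M₀ ∈ M_{2^n}(ℂ)` let
`𝒱_{M₀} = span{g M₀ g : g ∈ G}`. Then the linear span (supremum), over all `M₀` for
which `𝒱_{M₀}` contains the identity and is closed under adjoints, of the subspaces
`𝒱_{M₀}`, equals `span((𝒫_n \ N(G)) ∪ {I₂^{⊗n}})`, where
`N(G) = {h ∈ 𝒫_n : h G h⁻¹ = G}` is the normalizer of `G` in `𝒫_n`. -/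
theorem statement11 (n : ℕ)
    (G : Subgroup (Matrix (Fin n → Fin 2) (Fin n → Fin 2) ℂ)ˣ)
    (hGpauli : ∀ g ∈ G, (g : Matrix (Fin n → Fin 2) (Fin n → Fin 2) ℂ) ∈ pauliGroupSet n)
    (hGcomm : ∀ g ∈ G, ∀ h ∈ G, g * h = h * g)
    (hneg : (-1 : (Matrix (Fin n → Fin 2) (Fin n → Fin 2) ℂ)ˣ) ∉ G)
    (V : Matrix (Fin n → Fin 2) (Fin n → Fin 2) ℂ →
      Submodule ℂ (Matrix (Fin n → Fin 2) (Fin n → Fin 2) ℂ))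
    (hV : ∀ M₀, V M₀ = Submodule.span ℂ
      {x | ∃ g ∈ G, x = (g : Matrix (Fin n → Fin 2) (Fin n → Fin 2) ℂ) * M₀ *
        (g : Matrix (Fin n → Fin 2) (Fin n → Fin 2) ℂ)})
    (N : Set (Matrix (Fin n → Fin 2) (Fin n → Fin 2) ℂ))
    (hN : N = {h ∈ pauliGroupSet n |
      (fun g => h * g * h⁻¹) ''
          (Units.val '' (G : Set (Matrix (Fin n → Fin 2) (Fin n → Fin 2) ℂ)ˣ))
        = Units.val '' (G : Set (Matrix (Fin n → Fin 2) (Fin n → Fin 2) ℂ)ˣ)}) :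
    (⨆ M₀ ∈ {M : Matrix (Fin n → Fin 2) (Fin n → Fin 2) ℂ |
        (1 : Matrix (Fin n → Fin 2) (Fin n → Fin 2) ℂ) ∈ V M ∧ ∀ A ∈ V M, Aᴴ ∈ V M},
      V M₀) =
    Submodule.span ℂ ((pauliGroupSet n \ N) ∪
      {(1 : Matrix (Fin n → Fin 2) (Fin n → Fin 2) ℂ)}) := by
  have hkey := hkey_lemma G hGpauli hneg
  have hsqu := hsq_lemma G hGpauli hneg
  have hNw := hNword_lemma G hGpauli hneg N hN
  have hsqv : ∀ g ∈ G, (g : Matrix (Fin n → Fin 2) (Fin n → Fin 2) ℂ) *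
      (g : Matrix (Fin n → Fin 2) (Fin n → Fin 2) ℂ) = 1 := by
    intro g hg
    rw [← Units.val_mul, hsqu g hg, Units.val_one]
  -- finiteness of G
  have hGvalfin : (Units.val '' (G : Set (Matrix (Fin n → Fin 2) (Fin n → Fin 2) ℂ)ˣ)).Finite :=
    (pg_finite n).subset (by rintro x ⟨g, hg, rfl⟩; exact hGpauli g hg)
  have hGfin : ((G : Set (Matrix (Fin n → Fin 2) (Fin n → Fin 2) ℂ)ˣ)).Finite :=
    Set.Finite.of_finite_image hGvalfin (fun a _ b _ h => Units.ext h)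
  classical
  set GS := hGfin.toFinset with hGSdef
  have hGS : ∀ g, g ∈ GS ↔ g ∈ G := fun g => by
    rw [hGSdef, Set.Finite.mem_toFinset]; rfl
  have hcard : ((GS.card : ℂ)) ≠ 0 :=
    Nat.cast_ne_zero.mpr (Finset.card_ne_zero_of_mem ((hGS 1).mpr G.one_mem))
  set E := Eop n GS with hEdef
  have hE1 : E 1 = 1 :=
    Eop_one GS (fun g hg => hsqv g ((hGS g).mp hg)) ⟨1, (hGS 1).mpr G.one_mem⟩
  have hE2 : ∀ g ∈ G, ∀ M, E ((g : Matrix (Fin n → Fin 2) (Fin n → Fin 2) ℂ) * M *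
      (g : Matrix (Fin n → Fin 2) (Fin n → Fin 2) ℂ)) = E M :=
    fun g hg M => Eop_conj G hGcomm GS hGS g hg M
  -- the key decomposition fact
  have hW : ∀ j : Fin n → Fin 4, pauliWord j - E (pauliWord j) ∈
      Submodule.span ℂ (pauliGroupSet n \ N) := by
    intro j
    by_cases hall : ∀ g ∈ G, (g : Matrix (Fin n → Fin 2) (Fin n → Fin 2) ℂ) * pauliWord j *
        (g : Matrix (Fin n → Fin 2) (Fin n → Fin 2) ℂ) = pauliWord j
    · have : E (pauliWord j) = pauliWord j := by
        rw [hEdef, Eop_apply]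
        have hsum : ∑ g ∈ GS, (g : Matrix (Fin n → Fin 2) (Fin n → Fin 2) ℂ) * pauliWord j *
            (g : Matrix (Fin n → Fin 2) (Fin n → Fin 2) ℂ) = GS.card • pauliWord j := by
          rw [Finset.sum_congr rfl fun g hg => hall g ((hGS g).mp hg), Finset.sum_const]
        rw [hsum, ← Nat.cast_smul_eq_nsmul ℂ, smul_smul, inv_mul_cancel₀ hcard, one_smul]
      rw [this, sub_self]
      exact zero_mem _
    · push_neg at hall
      obtain ⟨g₀, hg₀, hne0⟩ := hall
      have hwmem : pauliWord j ∈ pauliGroupSet n \ N :=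
        ⟨word_mem_pg j, fun hNmem => hne0 (((hNw j).mp hNmem) g₀ hg₀)⟩
      have hsing : pauliWord j - E (pauliWord j) ∈ Submodule.span ℂ {pauliWord j} := by
        refine sub_mem (Submodule.mem_span_singleton_self _) ?_
        rw [hEdef, Eop_apply]
        refine Submodule.smul_mem _ _ (Submodule.sum_mem _ fun g hg => ?_)
        obtain ⟨s, _, hgwg, -⟩ := hkey g ((hGS g).mp hg) j
        rw [hgwg]
        exact Submodule.smul_mem _ _ (Submodule.mem_span_singleton_self _)
      exact Submodule.span_le.mpr
        (Set.singleton_subset_iff.mpr (Submodule.subset_span hwmem)) hsing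
  have hEdiff : ∀ M, M - E M ∈ Submodule.span ℂ (pauliGroupSet n \ N) := by
    intro M
    have hrange : Set.range (pauliWord (n := n)) ⊆
        ↑(Submodule.comap (LinearMap.id - E) (Submodule.span ℂ (pauliGroupSet n \ N))) := by
      rintro x ⟨j, rfl⟩
      rw [SetLike.mem_coe, Submodule.mem_comap, LinearMap.sub_apply, LinearMap.id_apply]
      exact hW j
    have := Submodule.span_le.mpr hrange (word_span M)
    rw [Submodule.mem_comap, LinearMap.sub_apply, LinearMap.id_apply] at this
    exact this
  have h1ne : (1 : Matrix (Fin n → Fin 2) (Fin n → Fin 2) ℂ) ≠ 0 := by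
    intro h
    have := congrFun (congrFun h (fun _ => 0)) (fun _ => 0)
    simp [Matrix.one_apply] at this
  apply le_antisymm
  · -- ⊆
    apply iSup_le
    intro M₀
    apply iSup_le
    intro hM₀
    obtain ⟨h1V, -⟩ := hM₀
    rw [hV] at h1V
    have h1S : (1 : Matrix (Fin n → Fin 2) (Fin n → Fin 2) ℂ) ∈ Submodule.span ℂ
        (E '' {x | ∃ g ∈ G, x = (g : Matrix (Fin n → Fin 2) (Fin n → Fin 2) ℂ) * M₀ *
          (g : Matrix (Fin n → Fin 2) (Fin n → Fin 2) ℂ)}) := by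
      have := Submodule.apply_mem_span_image_of_mem_span E h1V
      rwa [hE1] at this
    have hESsub : E '' {x | ∃ g ∈ G, x = (g : Matrix (Fin n → Fin 2) (Fin n → Fin 2) ℂ) * M₀ *
        (g : Matrix (Fin n → Fin 2) (Fin n → Fin 2) ℂ)} ⊆ {E M₀} := by
      rintro x ⟨y, ⟨g, hg, rfl⟩, rfl⟩
      exact Set.mem_singleton_iff.mpr (hE2 g hg M₀)
    obtain ⟨μ, hμ⟩ := Submodule.mem_span_singleton.mp (Submodule.span_mono hESsub h1S)
    have hμ0 : μ ≠ 0 := fun h => h1ne (by rw [← hμ, h, zero_smul])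
    have hEM0 : E M₀ = μ⁻¹ • (1 : Matrix (Fin n → Fin 2) (Fin n → Fin 2) ℂ) := by
      rw [← hμ, smul_smul, inv_mul_cancel₀ hμ0, one_smul]
    rw [hV]
    apply Submodule.span_le.mpr
    rintro x hx
    rw [SetLike.mem_coe]
    have hxE : E x = μ⁻¹ • (1 : Matrix (Fin n → Fin 2) (Fin n → Fin 2) ℂ) := by
      obtain ⟨g, hg, rfl⟩ := hx
      rw [hE2 g hg M₀, hEM0]
    have hmem : (x - E x) + E x ∈ Submodule.span ℂ ((pauliGroupSet n \ N) ∪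
        {(1 : Matrix (Fin n → Fin 2) (Fin n → Fin 2) ℂ)}) := by
      refine add_mem (Submodule.span_mono Set.subset_union_left (hEdiff x)) ?_
      rw [hxE]
      exact Submodule.smul_mem _ _
        (Submodule.subset_span (Set.mem_union_right _ rfl))
    simpa using hmem
  · -- ⊇
    rw [Submodule.span_le]
    rintro p (⟨hpP, hpN⟩ | hp1)
    · obtain ⟨c, hc, j, rfl⟩ := hpP
      have hcne : c ≠ 0 := by
        rcases hc with rfl | rfl | rfl | rfl <;> simp [Complex.I_ne_zero]
      have hwN : pauliWord j ∉ N := by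
        intro hwNmem
        apply hpN
        rw [hN] at hwNmem ⊢
        obtain ⟨-, hcond⟩ := hwNmem
        refine ⟨⟨c, hc, j, rfl⟩, ?_⟩
        have hfun : (fun x => (c • pauliWord j) * x * (c • pauliWord j)⁻¹) =
            (fun x => pauliWord j * x * (pauliWord j)⁻¹) :=
          funext fun x => smul_word_conj_eq hcne j x
        rw [hfun]
        exact hcond
      have h2 : ¬ ∀ g ∈ G, (g : Matrix (Fin n → Fin 2) (Fin n → Fin 2) ℂ) * pauliWord j *
          (g : Matrix (Fin n → Fin 2) (Fin n → Fin 2) ℂ) = pauliWord j :=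
        fun h => hwN ((hNw j).mpr h)
      push_neg at h2
      obtain ⟨g₀, hg₀, hne0⟩ := h2
      have hg₀w : (g₀ : Matrix (Fin n → Fin 2) (Fin n → Fin 2) ℂ) * pauliWord j *
          (g₀ : Matrix (Fin n → Fin 2) (Fin n → Fin 2) ℂ) = -(pauliWord j) := by
        obtain ⟨s, hs, h1, -⟩ := hkey g₀ hg₀ j
        rcases hs with rfl | rfl
        · exact absurd (by rw [h1, one_smul]) hne0
        · rw [h1, neg_smul, one_smul]
      have hplus : (1 : Matrix (Fin n → Fin 2) (Fin n → Fin 2) ℂ) + pauliWord j ∈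
          {x | ∃ g ∈ G, x = (g : Matrix (Fin n → Fin 2) (Fin n → Fin 2) ℂ) *
            (1 + pauliWord j) * (g : Matrix (Fin n → Fin 2) (Fin n → Fin 2) ℂ)} :=
        ⟨1, G.one_mem, by simp⟩
      have hminus : (1 : Matrix (Fin n → Fin 2) (Fin n → Fin 2) ℂ) - pauliWord j ∈
          {x | ∃ g ∈ G, x = (g : Matrix (Fin n → Fin 2) (Fin n → Fin 2) ℂ) *
            (1 + pauliWord j) * (g : Matrix (Fin n → Fin 2) (Fin n → Fin 2) ℂ)} := by
        refine ⟨g₀, hg₀, ?_⟩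
        rw [mul_add, add_mul, mul_one, hsqv g₀ hg₀, hg₀w, sub_eq_add_neg]
      have hSform : ∀ x ∈ {x | ∃ g ∈ G, x = (g : Matrix (Fin n → Fin 2) (Fin n → Fin 2) ℂ) *
          (1 + pauliWord j) * (g : Matrix (Fin n → Fin 2) (Fin n → Fin 2) ℂ)},
          x = 1 + pauliWord j ∨ x = 1 - pauliWord j := by
        rintro x ⟨g, hg, rfl⟩
        obtain ⟨s, hs, h1, -⟩ := hkey g hg j
        rw [mul_add, add_mul, mul_one, hsqv g hg, h1]
        rcases hs with rfl | rfl
        · left; rw [one_smul]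
        · right; rw [neg_smul, one_smul, sub_eq_add_neg]
      have h1V : (1 : Matrix (Fin n → Fin 2) (Fin n → Fin 2) ℂ) ∈ V (1 + pauliWord j) := by
        rw [hV]
        have hcomb : (1 : Matrix (Fin n → Fin 2) (Fin n → Fin 2) ℂ) =
            (2⁻¹ : ℂ) • (1 + pauliWord j) + (2⁻¹ : ℂ) • (1 - pauliWord j) := by
          module
        have hm := add_mem (Submodule.smul_mem _ (2⁻¹ : ℂ) (Submodule.subset_span hplus))
          (Submodule.smul_mem _ (2⁻¹ : ℂ) (Submodule.subset_span hminus))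
        rw [← hcomb] at hm
        exact hm
      have hwV : pauliWord j ∈ V (1 + pauliWord j) := by
        rw [hV]
        have hcomb : pauliWord j =
            (2⁻¹ : ℂ) • ((1 : Matrix (Fin n → Fin 2) (Fin n → Fin 2) ℂ) + pauliWord j) -
            (2⁻¹ : ℂ) • (1 - pauliWord j) := by
          module
        have hm := sub_mem (Submodule.smul_mem _ (2⁻¹ : ℂ) (Submodule.subset_span hplus))
          (Submodule.smul_mem _ (2⁻¹ : ℂ) (Submodule.subset_span hminus))
        rw [← hcomb] at hm
        exact hm
      have hadj : ∀ A ∈ V (1 + pauliWord j), Aᴴ ∈ V (1 + pauliWord j) := by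
        intro A hA
        rw [hV] at hA ⊢
        refine Submodule.span_induction ?_ ?_ ?_ ?_ hA
        · intro x hx
          have hxh : xᴴ = x := by
            rcases hSform x hx with rfl | rfl
            · rw [conjTranspose_add, conjTranspose_one, word_herm]
            · rw [conjTranspose_sub, conjTranspose_one, word_herm]
          rw [hxh]
          exact Submodule.subset_span hx
        · rw [conjTranspose_zero]; exact zero_mem _
        · intro x y _ _ hx hy
          rw [conjTranspose_add]; exact add_mem hx hy
        · intro a x _ hx
          rw [conjTranspose_smul]; exact Submodule.smul_mem _ _ hx
      have hpmem : c • pauliWord j ∈ V (1 + pauliWord j) := Submodule.smul_mem _ c hwV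
      exact Submodule.mem_iSup_of_mem (1 + pauliWord j)
        (Submodule.mem_iSup_of_mem ⟨h1V, hadj⟩ hpmem)
    · rw [Set.mem_singleton_iff] at hp1
      subst hp1
      have hS1 : {x | ∃ g ∈ G, x = (g : Matrix (Fin n → Fin 2) (Fin n → Fin 2) ℂ) *
          (1 : Matrix (Fin n → Fin 2) (Fin n → Fin 2) ℂ) *
          (g : Matrix (Fin n → Fin 2) (Fin n → Fin 2) ℂ)} ⊆
          {(1 : Matrix (Fin n → Fin 2) (Fin n → Fin 2) ℂ)} := by
        rintro x ⟨g, hg, rfl⟩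
        rw [Set.mem_singleton_iff, mul_one, hsqv g hg]
      have h1V : (1 : Matrix (Fin n → Fin 2) (Fin n → Fin 2) ℂ) ∈ V 1 := by
        rw [hV]
        exact Submodule.subset_span ⟨1, G.one_mem, by simp⟩
      have hadj : ∀ A ∈ V 1, Aᴴ ∈ V 1 := by
        intro A hA
        rw [hV] at hA
        have : A ∈ Submodule.span ℂ {(1 : Matrix (Fin n → Fin 2) (Fin n → Fin 2) ℂ)} :=
          Submodule.span_mono hS1 hA
        obtain ⟨c, rfl⟩ := Submodule.mem_span_singleton.mp this
        rw [conjTranspose_smul, conjTranspose_one]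
        exact Submodule.smul_mem _ _ h1V
      exact Submodule.mem_iSup_of_mem 1 (Submodule.mem_iSup_of_mem ⟨h1V, hadj⟩ h1V)
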